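/- Let X and Y be topological spaces, with continuous maps μ_X : X × X → X, μ_Y : Y × Y → Y and points e_X ∈ X, e_Y ∈ Y, each satisfying: μ(e,·) ≃ id and μ(·,e) ≃ id; μ∘(μ×id) ≃ μ∘(id×μ); and μ ≃ μ∘swap. Let ρ : X × Y → Y be a continuous map, and suppose there exists a continuous map φ : X → Y admitting a continuous homotopy inverse, such that φ(e_X) lies in the path component of e_Y and ρ ≃ μ_Y∘(φ×id_Y) as continuous maps X × Y → Y. Then for every a ∈ X, the map y ↦ ρ(a,y) is homotopic to the identity of Y if and only if a lies in the path component of e_X. -/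

import Mathlib

private lemma joined_map {Y Z : Type*} [TopologicalSpace Y] [TopologicalSpace Z]
    {f : C(Y, Z)} {x y : Y} (h : Joined x y) : Joined (f x) (f y) :=
  ⟨h.somePath.map f.continuous⟩

private lemma homotopic_path {Y Z : Type*} [TopologicalSpace Y] [TopologicalSpace Z]
    {f g : C(Y, Z)} (h : f.Homotopic g) (y : Y) : Joined (f y) (g y) := by
  obtain ⟨F⟩ := h
  exact ⟨⟨⟨fun t => F (t, y), F.continuous.comp (by fun_prop)⟩, F.apply_zero y, F.apply_one y⟩⟩

private lemma mul_homotopic_of_joined {Y : Type*} [TopologicalSpace Y] (μ : C(Y × Y, Y))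
    {b c : Y} (h : Joined b c) :
    (μ.comp ((ContinuousMap.const Y b).prodMk (ContinuousMap.id Y))).Homotopic
      (μ.comp ((ContinuousMap.const Y c).prodMk (ContinuousMap.id Y))) := by
  obtain ⟨p⟩ := h
  exact ⟨⟨⟨fun q => μ (p q.1, q.2), by fun_prop⟩,
    fun y => by simp, fun y => by simp⟩⟩

/-- Let `(X, μ_X, e_X)` and `(Y, μ_Y, e_Y)` be homotopy-unital, homotopy-associative,
homotopy-commutative `H`-spaces and `ρ : X × Y → Y` a continuous map.  Suppose there is
a continuous map `φ : X → Y` with a continuous homotopy inverse `ψ`, such that `φ e_X`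
lies in the path component of `e_Y` and `ρ ≃ μ_Y ∘ (φ × id_Y)`.  Then for every `a`,
the map `ρ (a, ·)` is homotopic to `id_Y` iff `a` lies in the path component of `e_X`. -/
theorem action_free_iff {X Y : Type*} [TopologicalSpace X] [TopologicalSpace Y]
    (μX : C(X × X, X)) (eX : X) (μY : C(Y × Y, Y)) (eY : Y)
    (hlX : (μX.comp ((ContinuousMap.const X eX).prodMk (ContinuousMap.id X))).Homotopic
      (ContinuousMap.id X))
    (hrX : (μX.comp ((ContinuousMap.id X).prodMk (ContinuousMap.const X eX))).Homotopic
      (ContinuousMap.id X))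
    (hassocX : ContinuousMap.Homotopic
      ⟨fun p : X × X × X => μX (μX (p.1, p.2.1), p.2.2), by fun_prop⟩
      ⟨fun p : X × X × X => μX (p.1, μX (p.2.1, p.2.2)), by fun_prop⟩)
    (hcommX : ContinuousMap.Homotopic μX
      (μX.comp ⟨fun p : X × X => (p.2, p.1), by fun_prop⟩))
    (hlY : (μY.comp ((ContinuousMap.const Y eY).prodMk (ContinuousMap.id Y))).Homotopic
      (ContinuousMap.id Y))
    (hrY : (μY.comp ((ContinuousMap.id Y).prodMk (ContinuousMap.const Y eY))).Homotopic
      (ContinuousMap.id Y))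
    (hassocY : ContinuousMap.Homotopic
      ⟨fun p : Y × Y × Y => μY (μY (p.1, p.2.1), p.2.2), by fun_prop⟩
      ⟨fun p : Y × Y × Y => μY (p.1, μY (p.2.1, p.2.2)), by fun_prop⟩)
    (hcommY : ContinuousMap.Homotopic μY
      (μY.comp ⟨fun p : Y × Y => (p.2, p.1), by fun_prop⟩))
    (ρ : C(X × Y, Y))
    (φ : C(X, Y)) (ψ : C(Y, X))
    (hψφ : (ψ.comp φ).Homotopic (ContinuousMap.id X))
    (hφψ : (φ.comp ψ).Homotopic (ContinuousMap.id Y))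
    (he : φ eX ∈ pathComponent eY)
    (hρ : ρ.Homotopic (μY.comp (φ.prodMap (ContinuousMap.id Y)))) :
    ∀ a : X,
      (ρ.comp ((ContinuousMap.const Y a).prodMk (ContinuousMap.id Y))).Homotopic
        (ContinuousMap.id Y) ↔ a ∈ pathComponent eX := by
  intro a
  have hincl : ∀ b : X,
      ((μY.comp (φ.prodMap (ContinuousMap.id Y))).comp
        ((ContinuousMap.const Y b).prodMk (ContinuousMap.id Y)))
      = μY.comp ((ContinuousMap.const Y (φ b)).prodMk (ContinuousMap.id Y)) := by
    intro b; ext y; rfl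
  have hstep : ∀ b : X,
      (ρ.comp ((ContinuousMap.const Y b).prodMk (ContinuousMap.id Y))).Homotopic
        (μY.comp ((ContinuousMap.const Y (φ b)).prodMk (ContinuousMap.id Y))) := by
    intro b
    have := ContinuousMap.Homotopic.comp hρ (ContinuousMap.Homotopic.refl
      ((ContinuousMap.const Y b).prodMk (ContinuousMap.id Y)))
    rwa [hincl b] at this
  have hjae : Joined eX a → Joined eY (φ a) := fun h =>
    he.trans ((joined_map (f := φ) h))
  constructor
  · intro h
    have key : (μY.comp ((ContinuousMap.const Y (φ a)).prodMk
        (ContinuousMap.id Y))).Homotopic (ContinuousMap.id Y) :=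
      (hstep a).symm.trans h
    have h1 : Joined (μY (φ a, eY)) eY := homotopic_path key eY
    have h2 : Joined (μY (φ a, eY)) (φ a) := homotopic_path hrY (φ a)
    have h7 : Joined (φ a) (φ eX) := (h2.symm.trans h1).trans he
    have h4 : Joined (ψ (φ a)) a := homotopic_path hψφ a
    have h5 : Joined (ψ (φ eX)) eX := homotopic_path hψφ eX
    exact (h4.symm.trans ((joined_map (f := ψ) h7).trans h5)).symm
  · intro ha
    have j : Joined (φ a) eY := (hjae ha).symm
    exact (hstep a).trans ((mul_homotopic_of_joined μY j).trans hlY)
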